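/- Carathéodory's theorem for pseudoconvex sets: let H be a pseudohalfplane hypergraph on vertex set S, S' ⊆ S, and v ∈ S. If v is strongly inside the convex hull of S' (equivalently, v is not an extremal vertex of H[S' ∪ {v}]), then there exists S'' ⊆ S' with |S''| ≤ 3 such that v ∈ Conv(S'') in H; moreover S'' can be chosen to consist of extremal vertices of H[S']. -/

import Mathlib

/-- A set `G` skips a vertex `a` if `min G < a < max G` and `a ∉ G`. -/
def Skips {α : Type*} [LinearOrder α] (G : Set α) (a : α) : Prop :=
  a ∉ G ∧ (∃ x ∈ G, x < a) ∧ (∃ z ∈ G, a < z)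

/-- A hypergraph (family of sets) on a linearly ordered vertex set is ABA-free if
there are no hyperedges `A, B` and vertices `x < y < z` with `x, z ∈ A \ B` and `y ∈ B \ A`. -/
def ABAFree {α : Type*} [LinearOrder α] (F : Set (Set α)) : Prop :=
  ¬ ∃ A ∈ F, ∃ B ∈ F, ∃ x y z : α, x < y ∧ y < z ∧
      x ∈ A ∧ x ∉ B ∧ z ∈ A ∧ z ∉ B ∧ y ∈ B ∧ y ∉ A

/-- A vertex is unskippable with respect to a family if no member of the family skips it. -/
def Unskippable {α : Type*} [LinearOrder α] (F : Set (Set α)) (a : α) : Prop :=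
  ∀ G ∈ F, ¬ Skips G a


/-- The convex hull of `X` in the hypergraph `H`: the intersection of all hyperedges
containing `X` (the empty intersection being the whole vertex set). -/
def Conv {α : Type*} [LinearOrder α] (H : Set (Set α)) (X : Set α) : Set α :=
  ⋂₀ {A | A ∈ H ∧ X ⊆ A}

section Aux

variable {α : Type*} [LinearOrder α]

lemma unskippable_image {F : Set (Set α)} {f : Set α → Set α} {a : α} :
    Unskippable (f '' F) a ↔ ∀ A ∈ F, ¬ Skips (f A) a := by
  constructor
  · intro h A hA
    exact h _ ⟨A, hA, rfl⟩
  · rintro h G ⟨A, hA, rfl⟩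
    exact h A hA

/-- Key transfer lemma (topset version): if `a` is "skipped" by `A` via witnesses `p < a < q`
in `A`, and `w` is skipped by `A₁` via `u < w < t`, then `a` is skipped by some member of `F`
via witnesses avoiding `w`, all taken from `{u, t, p, q}`. -/
lemma topTransfer {F : Set (Set α)} (hABA : ABAFree F) {A A₁ : Set α}
    (hA : A ∈ F) (hA₁ : A₁ ∈ F) {a w u t p q : α}
    (haA : a ∉ A) (hpA : p ∈ A) (hqA : q ∈ A) (hpa : p < a) (haq : a < q)
    (hwA₁ : w ∉ A₁) (huA₁ : u ∈ A₁) (htA₁ : t ∈ A₁) (huw : u < w) (hwt : w < t) :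
    ∃ A' ∈ F, ∃ p' q', p' < a ∧ a < q' ∧ p' ∈ A' ∧ q' ∈ A' ∧ a ∉ A' ∧
      p' ≠ w ∧ q' ≠ w ∧ (p' = u ∨ p' = t ∨ p' = p ∨ p' = q) ∧
      (q' = u ∨ q' = t ∨ q' = p ∨ q' = q) := by
  by_cases hpw : p = w
  · -- p = w, so w < a, w ∈ A
    have hwa : w < a := hpw ▸ hpa
    have hwA : w ∈ A := hpw ▸ hpA
    have hqw : q ≠ w := fun h => absurd (h ▸ haq) (not_lt.mpr (le_of_lt hwa))
    by_cases huA : u ∈ A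
    · exact ⟨A, hA, u, q, huw.trans hwa, haq, huA, hqA, haA, ne_of_lt huw, hqw,
        Or.inl rfl, Or.inr (Or.inr (Or.inr rfl))⟩
    · have htA : t ∈ A := by
        by_contra htA
        exact hABA ⟨A₁, hA₁, A, hA, u, w, t, huw, hwt, huA₁, huA, htA₁, htA, hwA, hwA₁⟩
      rcases lt_or_gt_of_ne (fun h : t = a => haA (h ▸ htA)) with hta | hat
      · exact ⟨A, hA, t, q, hta, haq, htA, hqA, haA, ne_of_gt hwt, hqw,
          Or.inr (Or.inl rfl), Or.inr (Or.inr (Or.inr rfl))⟩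
      · by_cases haA₁ : a ∈ A₁
        · exact absurd ⟨A₁, hA₁, A, hA, u, w, a, huw, hwa, huA₁, huA, haA₁, haA, hwA, hwA₁⟩
            hABA
        · exact ⟨A₁, hA₁, u, t, huw.trans hwa, hat, huA₁, htA₁, haA₁,
            ne_of_lt huw, ne_of_gt hwt, Or.inl rfl, Or.inr (Or.inl rfl)⟩
  · by_cases hqw : q = w
    · -- q = w, so a < w, w ∈ A
      have haw : a < w := hqw ▸ haq
      have hwA : w ∈ A := hqw ▸ hqA
      by_cases htA : t ∈ A
      · exact ⟨A, hA, p, t, hpa, haw.trans hwt, hpA, htA, haA, hpw, ne_of_gt hwt,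
          Or.inr (Or.inr (Or.inl rfl)), Or.inr (Or.inl rfl)⟩
      · have huA : u ∈ A := by
          by_contra huA
          exact hABA ⟨A₁, hA₁, A, hA, u, w, t, huw, hwt, huA₁, huA, htA₁, htA, hwA, hwA₁⟩
        rcases lt_or_gt_of_ne (fun h : u = a => haA (h ▸ huA)) with hua | hau
        · by_cases haA₁ : a ∈ A₁
          · exact absurd ⟨A₁, hA₁, A, hA, a, w, t, haw, hwt, haA₁, haA, htA₁, htA, hwA, hwA₁⟩
              hABA
          · exact ⟨A₁, hA₁, u, t, hua, haw.trans hwt, huA₁, htA₁, haA₁,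
              ne_of_lt huw, ne_of_gt hwt, Or.inl rfl, Or.inr (Or.inl rfl)⟩
        · exact ⟨A, hA, p, u, hpa, hau, hpA, huA, haA, hpw, ne_of_lt huw,
            Or.inr (Or.inr (Or.inl rfl)), Or.inl rfl⟩
    · exact ⟨A, hA, p, q, hpa, haq, hpA, hqA, haA, hpw, hqw,
        Or.inr (Or.inr (Or.inl rfl)), Or.inr (Or.inr (Or.inr rfl))⟩

/-- Key transfer lemma (bottomset version). -/
lemma botTransfer {F : Set (Set α)} (hABA : ABAFree F) {E B₁ : Set α}
    (hE : E ∈ F) (hB₁ : B₁ ∈ F) {a w u t p q : α}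
    (haE : a ∈ E) (hpE : p ∉ E) (hqE : q ∉ E) (hpa : p < a) (haq : a < q)
    (hwB₁ : w ∈ B₁) (huB₁ : u ∉ B₁) (htB₁ : t ∉ B₁) (huw : u < w) (hwt : w < t) :
    ∃ E' ∈ F, ∃ p' q', p' < a ∧ a < q' ∧ p' ∉ E' ∧ q' ∉ E' ∧ a ∈ E' ∧
      p' ≠ w ∧ q' ≠ w ∧ (p' = u ∨ p' = t ∨ p' = p ∨ p' = q) ∧
      (q' = u ∨ q' = t ∨ q' = p ∨ q' = q) := by
  by_cases hpw : p = w
  · -- p = w, so w < a, w ∉ E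
    have hwa : w < a := hpw ▸ hpa
    have hwE : w ∉ E := hpw ▸ hpE
    have hqw : q ≠ w := fun h => absurd (h ▸ haq) (not_lt.mpr (le_of_lt hwa))
    by_cases huE : u ∈ E
    · have htE : t ∉ E := by
        intro htE
        exact hABA ⟨E, hE, B₁, hB₁, u, w, t, huw, hwt, huE, huB₁, htE, htB₁, hwB₁, hwE⟩
      rcases lt_or_gt_of_ne (fun h : t = a => htE (h ▸ haE)) with hta | hat
      · exact ⟨E, hE, t, q, hta, haq, htE, hqE, haE, ne_of_gt hwt, hqw,
          Or.inr (Or.inl rfl), Or.inr (Or.inr (Or.inr rfl))⟩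
      · by_cases haB₁ : a ∈ B₁
        · exact ⟨B₁, hB₁, u, t, huw.trans hwa, hat, huB₁, htB₁, haB₁,
            ne_of_lt huw, ne_of_gt hwt, Or.inl rfl, Or.inr (Or.inl rfl)⟩
        · exact absurd ⟨E, hE, B₁, hB₁, u, w, a, huw, hwa, huE, huB₁, haE, haB₁, hwB₁, hwE⟩
            hABA
    · exact ⟨E, hE, u, q, huw.trans hwa, haq, huE, hqE, haE, ne_of_lt huw, hqw,
        Or.inl rfl, Or.inr (Or.inr (Or.inr rfl))⟩
  · by_cases hqw : q = w
    · -- q = w, so a < w, w ∉ E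
      have haw : a < w := hqw ▸ haq
      have hwE : w ∉ E := hqw ▸ hqE
      by_cases htE : t ∈ E
      · have huE : u ∉ E := by
          intro huE
          exact hABA ⟨E, hE, B₁, hB₁, u, w, t, huw, hwt, huE, huB₁, htE, htB₁, hwB₁, hwE⟩
        rcases lt_or_gt_of_ne (fun h : u = a => huE (h ▸ haE)) with hua | hau
        · by_cases haB₁ : a ∈ B₁
          · exact ⟨B₁, hB₁, u, t, hua, haw.trans hwt, huB₁, htB₁, haB₁,
              ne_of_lt huw, ne_of_gt hwt, Or.inl rfl, Or.inr (Or.inl rfl)⟩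
          · exact absurd ⟨E, hE, B₁, hB₁, a, w, t, haw, hwt, haE, haB₁, htE, htB₁, hwB₁, hwE⟩
              hABA
        · exact ⟨E, hE, p, u, hpa, hau, hpE, huE, haE, hpw, ne_of_lt huw,
            Or.inr (Or.inr (Or.inl rfl)), Or.inl rfl⟩
      · exact ⟨E, hE, p, t, hpa, haw.trans hwt, hpE, htE, haE, hpw, ne_of_gt hwt,
          Or.inr (Or.inr (Or.inl rfl)), Or.inr (Or.inl rfl)⟩
    · exact ⟨E, hE, p, q, hpa, haq, hpE, hqE, haE, hpw, hqw,
        Or.inr (Or.inr (Or.inl rfl)), Or.inr (Or.inr (Or.inr rfl))⟩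

/-- Unpack the "strongly inside" hypothesis into explicit witnesses. -/
lemma hv_unpack {F : Set (Set α)} {S' : Set α} {v : α}
    (hv : ¬ (Unskippable ((fun A => A ∩ insert v S') '' F) v ∨
             Unskippable ((fun A => insert v S' \ A) '' F) v)) :
    (∃ A ∈ F, v ∉ A ∧ ∃ x z, x ∈ A ∧ x ∈ S' ∧ z ∈ A ∧ z ∈ S' ∧ x < v ∧ v < z) ∧
    (∃ B ∈ F, v ∈ B ∧ ∃ x z, x ∉ B ∧ x ∈ S' ∧ z ∉ B ∧ z ∈ S' ∧ x < v ∧ v < z) := by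
  push_neg at hv
  obtain ⟨h1, h2⟩ := hv
  rw [unskippable_image] at h1 h2
  push_neg at h1 h2
  obtain ⟨A, hA, hnA, ⟨x, hxm, hxv⟩, ⟨z, hzm, hvz⟩⟩ := h1
  obtain ⟨B, hB, hnB, ⟨x', hx'm, hx'v⟩, ⟨z', hz'm, hvz'⟩⟩ := h2
  constructor
  · refine ⟨A, hA, fun hvA => hnA ⟨hvA, Set.mem_insert v S'⟩, x, z, hxm.1, ?_, hzm.1, ?_,
      hxv, hvz⟩
    · rcases hxm.2 with h | h
      · exact absurd (h ▸ hxv) (lt_irrefl v)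
      · exact h
    · rcases hzm.2 with h | h
      · exact absurd (h ▸ hvz) (lt_irrefl v)
      · exact h
  · have hvB : v ∈ B := by
      by_contra hvB
      exact hnB ⟨Set.mem_insert v S', hvB⟩
    refine ⟨B, hB, hvB, x', z', hx'm.2, ?_, hz'm.2, ?_, hx'v, hvz'⟩
    · rcases hx'm.1 with h | h
      · exact absurd (h ▸ hx'v) (lt_irrefl v)
      · exact h
    · rcases hz'm.1 with h | h
      · exact absurd (h ▸ hvz') (lt_irrefl v)
      · exact h

/-- Deleting a doubly-skipped (non-extremal) vertex preserves the
"strongly inside" property of `v`. -/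
lemma hv_del {F : Set (Set α)} (hABA : ABAFree F) {S' : Set α} {v w : α}
    (hwS : w ∈ S')
    (hv : ¬ (Unskippable ((fun A => A ∩ insert v S') '' F) v ∨
             Unskippable ((fun A => insert v S' \ A) '' F) v))
    (hwt : ∃ A ∈ F, Skips (A ∩ S') w) (hwb : ∃ A ∈ F, Skips (S' \ A) w) :
    ¬ (Unskippable ((fun A => A ∩ insert v (S' \ {w})) '' F) v ∨
       Unskippable ((fun A => insert v (S' \ {w}) \ A) '' F) v) := by
  by_cases hwv : w = v
  · subst hwv
    have he : insert w (S' \ {w}) = insert w S' := by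
      ext b
      by_cases hbw : b = w <;> simp [hbw]
    rw [he]
    exact hv
  · obtain ⟨⟨A, hA, hvA, x, z, hxA, hxS, hzA, hzS, hxv, hvz⟩,
      ⟨B, hB, hvB, x', z', hx'B, hx'S, hz'B, hz'S, hx'v, hvz'⟩⟩ := hv_unpack hv
    obtain ⟨A₁, hA₁, hnw₁, ⟨u, hum, huw⟩, ⟨t, htm, hwt'⟩⟩ := hwt
    obtain ⟨B₁, hB₁, hnw₂, ⟨u', hu'm, hu'w⟩, ⟨t', ht'm, hwt''⟩⟩ := hwb
    have hwA₁ : w ∉ A₁ := fun h => hnw₁ ⟨h, hwS⟩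
    have hwB₁ : w ∈ B₁ := by
      by_contra h
      exact hnw₂ ⟨hwS, h⟩
    -- transfer top witness
    obtain ⟨A', hA', p', q', hp'v, hvq', hp'A', hq'A', hvA', hp'w, hq'w, hp'mem, hq'mem⟩ :=
      topTransfer hABA hA hA₁ hvA hxA hzA hxv hvz hwA₁ hum.1 htm.1 huw hwt'
    have hp'S : p' ∈ S' := by
      rcases hp'mem with h | h | h | h <;> subst h
      exacts [hum.2, htm.2, hxS, hzS]
    have hq'S : q' ∈ S' := by
      rcases hq'mem with h | h | h | h <;> subst h
      exacts [hum.2, htm.2, hxS, hzS]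
    -- transfer bottom witness
    obtain ⟨B', hB', r', s', hr'v, hvs', hr'B', hs'B', hvB', hr'w, hs'w, hr'mem, hs'mem⟩ :=
      botTransfer hABA hB hB₁ hvB hx'B hz'B hx'v hvz' hwB₁ hu'm.2 ht'm.2 hu'w hwt''
    have hr'S : r' ∈ S' := by
      rcases hr'mem with h | h | h | h <;> subst h
      exacts [hu'm.1, ht'm.1, hx'S, hz'S]
    have hs'S : s' ∈ S' := by
      rcases hs'mem with h | h | h | h <;> subst h
      exacts [hu'm.1, ht'm.1, hx'S, hz'S]
    rintro (h1 | h2)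
    · refine h1 _ ⟨A', hA', rfl⟩ ⟨fun h => hvA' h.1, ⟨p', ⟨hp'A', ?_⟩, hp'v⟩,
        ⟨q', ⟨hq'A', ?_⟩, hvq'⟩⟩
      · exact Set.mem_insert_of_mem v ⟨hp'S, hp'w⟩
      · exact Set.mem_insert_of_mem v ⟨hq'S, hq'w⟩
    · refine h2 _ ⟨B', hB', rfl⟩ ⟨fun h => h.2 hvB', ⟨r', ⟨?_, hr'B'⟩, hr'v⟩,
        ⟨s', ⟨?_, hs'B'⟩, hvs'⟩⟩
      · exact Set.mem_insert_of_mem v ⟨hr'S, hr'w⟩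
      · exact Set.mem_insert_of_mem v ⟨hs'S, hs'w⟩

/-- Deleting a doubly-skipped vertex preserves extremality (in reverse direction). -/
lemma ext_del {F : Set (Set α)} (hABA : ABAFree F) {S' : Set α} {w a : α}
    (hwS : w ∈ S')
    (hwt : ∃ A ∈ F, Skips (A ∩ S') w) (hwb : ∃ A ∈ F, Skips (S' \ A) w)
    (haS : a ∈ S') (_haw : a ≠ w)
    (hext2 : Unskippable ((fun A => A ∩ (S' \ {w})) '' F) a ∨
             Unskippable ((fun A => (S' \ {w}) \ A) '' F) a) :
    Unskippable ((fun A => A ∩ S') '' F) a ∨ Unskippable ((fun A => S' \ A) '' F) a := by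
  by_contra h
  push_neg at h
  obtain ⟨h1, h2⟩ := h
  rw [unskippable_image] at h1 h2
  push_neg at h1 h2
  obtain ⟨A, hA, hnaA, ⟨p, hpm, hpa⟩, ⟨q, hqm, haq⟩⟩ := h1
  obtain ⟨E, hEF, hnaE, ⟨p₂, hp₂m, hp₂a⟩, ⟨q₂, hq₂m, haq₂⟩⟩ := h2
  have haA : a ∉ A := fun hh => hnaA ⟨hh, haS⟩
  have haE : a ∈ E := by
    by_contra hh
    exact hnaE ⟨haS, hh⟩
  obtain ⟨A₁, hA₁, hnw₁, ⟨u, hum, huw⟩, ⟨t, htm, hwt'⟩⟩ := hwt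
  obtain ⟨B₁, hB₁, hnw₂, ⟨u', hu'm, hu'w⟩, ⟨t', ht'm, hwt''⟩⟩ := hwb
  have hwA₁ : w ∉ A₁ := fun hh => hnw₁ ⟨hh, hwS⟩
  have hwB₁ : w ∈ B₁ := by
    by_contra hh
    exact hnw₂ ⟨hwS, hh⟩
  obtain ⟨A', hA', p', q', hp'a, haq', hp'A', hq'A', haA', hp'w, hq'w, hp'mem, hq'mem⟩ :=
    topTransfer hABA hA hA₁ haA hpm.1 hqm.1 hpa haq hwA₁ hum.1 htm.1 huw hwt'
  have hp'S : p' ∈ S' := by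
    rcases hp'mem with hh | hh | hh | hh <;> subst hh
    exacts [hum.2, htm.2, hpm.2, hqm.2]
  have hq'S : q' ∈ S' := by
    rcases hq'mem with hh | hh | hh | hh <;> subst hh
    exacts [hum.2, htm.2, hpm.2, hqm.2]
  obtain ⟨E', hE', r', s', hr'a, has', hr'E', hs'E', haE', hr'w, hs'w, hr'mem, hs'mem⟩ :=
    botTransfer hABA hEF hB₁ haE hp₂m.2 hq₂m.2 hp₂a haq₂ hwB₁ hu'm.2 ht'm.2 hu'w hwt''
  have hr'S : r' ∈ S' := by
    rcases hr'mem with hh | hh | hh | hh <;> subst hh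
    exacts [hu'm.1, ht'm.1, hp₂m.1, hq₂m.1]
  have hs'S : s' ∈ S' := by
    rcases hs'mem with hh | hh | hh | hh <;> subst hh
    exacts [hu'm.1, ht'm.1, hp₂m.1, hq₂m.1]
  rcases hext2 with hx | hx
  · exact hx _ ⟨A', hA', rfl⟩ ⟨fun hh => haA' hh.1,
      ⟨p', ⟨hp'A', hp'S, hp'w⟩, hp'a⟩, ⟨q', ⟨hq'A', hq'S, hq'w⟩, haq'⟩⟩
  · exact hx _ ⟨E', hE', rfl⟩ ⟨fun hh => hh.2 haE',
      ⟨r', ⟨⟨hr'S, hr'w⟩, hr'E'⟩, hr'a⟩, ⟨s', ⟨⟨hs'S, hs'w⟩, hs'E'⟩, has'⟩⟩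

/-- Main lemma, by strong induction on the size of `S'`. -/
lemma caratheodory_main {α : Type*} [LinearOrder α] [Fintype α]
    (F : Set (Set α)) (hABA : ABAFree F) :
    ∀ (n : ℕ) (S' : Set α) (v : α), S'.ncard ≤ n →
    ¬ (Unskippable ((fun A => A ∩ insert v S') '' F) v ∨
       Unskippable ((fun A => insert v S' \ A) '' F) v) →
    ∃ S'' : Finset α, ↑S'' ⊆ S' ∧ S''.card ≤ 3 ∧ v ∈ Conv (F ∪ compl '' F) ↑S'' ∧
      ∀ a ∈ S'', Unskippable ((fun A => A ∩ S') '' F) a ∨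
                 Unskippable ((fun A => S' \ A) '' F) a := by
  intro n
  induction n with
  | zero =>
    intro S' v hn hv
    exfalso
    obtain ⟨⟨A, hA, hvA, x, z, hxA, hxS, _, _, _, _⟩, _⟩ := hv_unpack hv
    have hpos : 0 < S'.ncard := (Set.ncard_pos S'.toFinite).mpr ⟨x, hxS⟩
    omega
  | succ m ih =>
    intro S' v hn hv
    by_cases hext : ∀ w ∈ S', (Unskippable ((fun A => A ∩ S') '' F) w ∨
        Unskippable ((fun A => S' \ A) '' F) w)
    · -- all vertices of S' are extremal
      obtain ⟨⟨A, hA, hvA, x, z, hxA, hxS, hzA, hzS, hxv, hvz⟩,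
        ⟨B, hB, hvB, x', z', hx'B, hx'S, hz'B, hz'S, hx'v, hvz'⟩⟩ := hv_unpack hv
      by_cases hC : ∃ C ∈ F, v ∉ C ∧ x ∈ C ∧ z ∈ C ∧ x' ∈ C
      · -- use {x', z', z}
        obtain ⟨C, hCF, hvC, hxC, hzC, hx'C⟩ := hC
        refine ⟨{x', z', z}, ?_, ?_, ?_, ?_⟩
        · intro b hb
          simp only [Finset.coe_insert, Set.mem_insert_iff, Finset.coe_singleton,
            Set.mem_singleton_iff] at hb
          rcases hb with rfl | rfl | rfl
          exacts [hx'S, hz'S, hzS]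
        · calc ({x', z', z} : Finset α).card
              ≤ ({z', z} : Finset α).card + 1 := Finset.card_insert_le _ _
            _ ≤ (({z} : Finset α).card + 1) + 1 := by
                exact Nat.add_le_add_right (Finset.card_insert_le _ _) 1
            _ ≤ 3 := by simp
        · rw [Conv, Set.mem_sInter]
          rintro G ⟨hGH, hsub⟩
          have hx'G : x' ∈ G := hsub (by simp)
          have hz'G : z' ∈ G := hsub (by simp)
          have hzG : z ∈ G := hsub (by simp)
          rcases hGH with hGF | ⟨D, hD, rfl⟩
          · by_contra hvG
            exact hABA ⟨G, hGF, B, hB, x', v, z', hx'v, hvz', hx'G, hx'B, hz'G, hz'B,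
              hvB, hvG⟩
          · intro hvD
            exact hABA ⟨C, hCF, D, hD, x', v, z, hx'v, hvz, hx'C, hx'G, hzC, hzG,
              hvD, hvC⟩
        · intro a ha
          simp only [Finset.mem_insert, Finset.mem_singleton] at ha
          rcases ha with rfl | rfl | rfl
          exacts [hext a hx'S, hext a hz'S, hext a hzS]
      · -- use {x, z, x'}
        refine ⟨{x, z, x'}, ?_, ?_, ?_, ?_⟩
        · intro b hb
          simp only [Finset.coe_insert, Set.mem_insert_iff, Finset.coe_singleton,
            Set.mem_singleton_iff] at hb
          rcases hb with rfl | rfl | rfl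
          exacts [hxS, hzS, hx'S]
        · calc ({x, z, x'} : Finset α).card
              ≤ ({z, x'} : Finset α).card + 1 := Finset.card_insert_le _ _
            _ ≤ (({x'} : Finset α).card + 1) + 1 := by
                exact Nat.add_le_add_right (Finset.card_insert_le _ _) 1
            _ ≤ 3 := by simp
        · rw [Conv, Set.mem_sInter]
          rintro G ⟨hGH, hsub⟩
          have hxG : x ∈ G := hsub (by simp)
          have hzG : z ∈ G := hsub (by simp)
          have hx'G : x' ∈ G := hsub (by simp)
          rcases hGH with hGF | ⟨D, hD, rfl⟩
          · by_contra hvG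
            exact hC ⟨G, hGF, hvG, hxG, hzG, hx'G⟩
          · intro hvD
            exact hABA ⟨A, hA, D, hD, x, v, z, hxv, hvz, hxA, hxG, hzA, hzG, hvD, hvA⟩
        · intro a ha
          simp only [Finset.mem_insert, Finset.mem_singleton] at ha
          rcases ha with rfl | rfl | rfl
          exacts [hext a hxS, hext a hzS, hext a hx'S]
    · -- there is a non-extremal vertex w; delete it
      push_neg at hext
      obtain ⟨w, hwS, hw⟩ := hext
      obtain ⟨hw1, hw2⟩ := hw
      rw [unskippable_image] at hw1 hw2
      push_neg at hw1 hw2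
      obtain ⟨A₁, hA₁, hsk1⟩ := hw1
      obtain ⟨B₁, hB₁, hsk2⟩ := hw2
      have hwtop : ∃ A ∈ F, Skips (A ∩ S') w := ⟨A₁, hA₁, hsk1⟩
      have hwbot : ∃ A ∈ F, Skips (S' \ A) w := ⟨B₁, hB₁, hsk2⟩
      have hvd := hv_del hABA hwS hv hwtop hwbot
      have hcard : (S' \ {w}).ncard ≤ m := by
        have := Set.ncard_diff_singleton_lt_of_mem hwS S'.toFinite
        omega
      obtain ⟨S'', h1, h2, h3, h4⟩ := ih (S' \ {w}) v hcard hvd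
      refine ⟨S'', h1.trans Set.diff_subset, h2, h3, fun a ha => ?_⟩
      have haSw : a ∈ S' \ {w} := h1 (Finset.mem_coe.mpr ha)
      exact ext_del hABA hwS hwtop hwbot haSw.1 haSw.2 (h4 a ha)

end Aux

/-- Carathéodory's theorem for pseudoconvex sets: if `v` is strongly inside the convex
hull of `S'` (equivalently, `v` is not an extremal vertex of the induced subhypergraph
on `S' ∪ {v}`), then `v` lies in the convex hull of at most 3 vertices of `S'`, each of
which is an extremal vertex of the induced subhypergraph on `S'`. -/
theorem caratheodory_pseudoconvex {α : Type*} [LinearOrder α] [Fintype α]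
    (F : Set (Set α)) (hABA : ABAFree F)
    (H : Set (Set α)) (hH : H ⊆ F ∪ compl '' F)
    (S' : Set α) (v : α)
    (hv : ¬ (Unskippable ((fun A => A ∩ insert v S') '' F) v ∨
             Unskippable ((fun A => insert v S' \ A) '' F) v)) :
    ∃ S'' : Finset α, ↑S'' ⊆ S' ∧ S''.card ≤ 3 ∧ v ∈ Conv H ↑S'' ∧
      ∀ a ∈ S'', Unskippable ((fun A => A ∩ S') '' F) a ∨
                 Unskippable ((fun A => S' \ A) '' F) a := by
  obtain ⟨S'', h1, h2, h3, h4⟩ := caratheodory_main F hABA S'.ncard S' v le_rfl hv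
  refine ⟨S'', h1, h2, ?_, h4⟩
  rw [Conv, Set.mem_sInter]
  rintro G ⟨hGH, hsub⟩
  rw [Conv, Set.mem_sInter] at h3
  exact h3 G ⟨hH hGH, hsub⟩
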